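/- Let 𝔤 ⊆ E be a linear subspace with orthogonal complement 𝔤ᗮ and orthogonal projection P⊥ onto 𝔤ᗮ. Let H : E → E be self-adjoint with H(𝔤ᗮ) ⊆ 𝔤ᗮ and λ_min‖y‖² ≤ ⟨H·y, y⟩ ≤ λ_max‖y‖² for all y ∈ 𝔤ᗮ, where 0 < λ_min ≤ λ_max. Let α, h > 0, let M ∈ E be symmetric with c₁·I ≼ M ≼ c₂·I (0 < c₁ ≤ c₂), let y ∈ 𝔤ᗮ, and set y⁺ = y − h·α·P⊥((H·y)·M⁻¹). Then, with 𝒱_d(z) := ⟨H·z, z⟩, one has 𝒱_d(y⁺) ≤ (1 − 2·α·h·λ_min/c₂ + α²·h²·λ_max²/c₁²)·𝒱_d(y). -/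

import Mathlib

open scoped Matrix

attribute [local instance] Matrix.frobeniusNormedAddCommGroup Matrix.frobeniusNormedSpace

def fip {n : ℕ} (A B : Matrix (Fin n) (Fin n) ℝ) : ℝ := (Aᵀ * B).trace

/-- The orthogonal complement of a subspace of real `n × n` matrices with respect to the
Frobenius inner product. -/
def mperp {n : ℕ} (g : Submodule ℝ (Matrix (Fin n) (Fin n) ℝ)) :
    Submodule ℝ (Matrix (Fin n) (Fin n) ℝ) where
  carrier := {y | ∀ v ∈ g, fip v y = 0}
  add_mem' := by
    intro a b ha hb v hv
    have ha' := ha v hv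
    have hb' := hb v hv
    simp only [fip] at *
    rw [Matrix.mul_add, Matrix.trace_add, ha', hb', add_zero]
  zero_mem' := by
    intro v hv
    simp [fip]
  smul_mem' := by
    intro c a ha v hv
    have ha' := ha v hv
    simp only [fip] at *
    rw [Matrix.mul_smul, Matrix.trace_smul, ha', smul_zero]


section aux
variable {n : ℕ}

lemma fip_eq_sum (A B : Matrix (Fin n) (Fin n) ℝ) :
    fip A B = ∑ i, ∑ j, A i j * B i j := by
  simp [fip, Matrix.trace, Matrix.diag, Matrix.mul_apply, Matrix.transpose_apply]
  rw [Finset.sum_comm]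

lemma fip_symm (A B : Matrix (Fin n) (Fin n) ℝ) : fip A B = fip B A := by
  simp [fip_eq_sum, mul_comm]

lemma fip_self_nonneg (A : Matrix (Fin n) (Fin n) ℝ) : 0 ≤ fip A A := by
  rw [fip_eq_sum]
  exact Finset.sum_nonneg fun i _ => Finset.sum_nonneg fun j _ => mul_self_nonneg _

lemma fip_self_eq_norm_sq (A : Matrix (Fin n) (Fin n) ℝ) : fip A A = ‖A‖ ^ 2 := by
  rw [Matrix.frobenius_norm_def, ← Real.rpow_natCast _ 2, ← Real.rpow_mul (by positivity)]
  norm_num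
  rw [fip_eq_sum]
  congr 1; ext i; congr 1; ext j
  rw [← Real.rpow_natCast _ 2]
  norm_num [Real.norm_eq_abs, sq_abs, sq]

lemma fip_add_left (A B C : Matrix (Fin n) (Fin n) ℝ) :
    fip (A + B) C = fip A C + fip B C := by
  simp [fip_eq_sum, Matrix.add_apply, add_mul, Finset.sum_add_distrib]

lemma fip_smul_left (c : ℝ) (A B : Matrix (Fin n) (Fin n) ℝ) :
    fip (c • A) B = c * fip A B := by
  simp [fip_eq_sum, Matrix.smul_apply, Finset.mul_sum, mul_assoc]

lemma fip_smul_right (c : ℝ) (A B : Matrix (Fin n) (Fin n) ℝ) :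
    fip A (c • B) = c * fip A B := by
  rw [fip_symm, fip_smul_left, fip_symm]

lemma fip_add_right (A B C : Matrix (Fin n) (Fin n) ℝ) :
    fip A (B + C) = fip A B + fip A C := by
  rw [fip_symm, fip_add_left, fip_symm B A, fip_symm C A]

lemma fip_sub_right (A B C : Matrix (Fin n) (Fin n) ℝ) :
    fip A (B - C) = fip A B - fip A C := by
  simp [fip_eq_sum, Matrix.sub_apply, mul_sub, Finset.sum_sub_distrib]

lemma fip_sub_left (A B C : Matrix (Fin n) (Fin n) ℝ) :
    fip (A - B) C = fip A C - fip B C := by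
  rw [fip_symm, fip_sub_right, fip_symm A C, fip_symm B C]

/-- Cauchy–Schwarz for a positive semidefinite symmetric bilinear form on a submodule. -/
lemma cs_form {V : Type*} [AddCommGroup V] [Module ℝ V] (S : Submodule ℝ V)
    (Q : V → V → ℝ)
    (hadd : ∀ u v w, Q (u + v) w = Q u w + Q v w)
    (hsmul : ∀ (c : ℝ) u v, Q (c • u) v = c * Q u v)
    (hsymm : ∀ u v, Q u v = Q v u)
    (hpos : ∀ v ∈ S, 0 ≤ Q v v)
    (u v : V) (hu : u ∈ S) (hv : v ∈ S) : Q u v ^ 2 ≤ Q u u * Q v v := by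
  have key : ∀ t : ℝ, 0 ≤ Q v v * (t * t) + (2 * Q u v) * t + Q u u := by
    intro t
    have h0 : 0 ≤ Q (u + t • v) (u + t • v) := hpos _ (S.add_mem hu (S.smul_mem t hv))
    have hadd' : ∀ u v w : V, Q w (u + v) = Q w u + Q w v := by
      intro a b c; rw [hsymm, hadd, hsymm a c, hsymm b c]
    have hsmul' : ∀ (c : ℝ) u v, Q v (c • u) = c * Q v u := by
      intro c a b; rw [hsymm, hsmul, hsymm]
    rw [hadd, hadd', hadd', hsmul, hsmul', hsmul', hsmul] at h0
    rw [hsymm v u] at h0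
    nlinarith [h0]
  have := discrim_le_zero key
  rw [discrim] at this
  nlinarith [this]

end aux

section vec
variable {n : ℕ} {M : Matrix (Fin n) (Fin n) ℝ} {c₁ c₂ : ℝ}

lemma dot_self_nonneg (u : Fin n → ℝ) : 0 ≤ u ⬝ᵥ u :=
  Finset.sum_nonneg fun i _ => mul_self_nonneg _

lemma dot_cs (u v : Fin n → ℝ) : (u ⬝ᵥ v) ^ 2 ≤ (u ⬝ᵥ u) * (v ⬝ᵥ v) :=
  cs_form ⊤ (· ⬝ᵥ ·) (fun a b c => add_dotProduct a b c)
    (fun c a b => by simp [smul_dotProduct, smul_eq_mul])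
    (fun a b => dotProduct_comm a b)
    (fun a _ => dot_self_nonneg a) u v trivial trivial

lemma mulVec_symm_dot (hs : M.IsSymm) (u v : Fin n → ℝ) :
    u ⬝ᵥ (M *ᵥ v) = v ⬝ᵥ (M *ᵥ u) := by
  rw [Matrix.dotProduct_mulVec]
  conv_lhs => rw [← hs]
  rw [Matrix.vecMul_transpose, dotProduct_comm]

lemma form_cs (hs : M.IsSymm) (hlow : ∀ x, c₁ * (x ⬝ᵥ x) ≤ x ⬝ᵥ (M *ᵥ x)) (hc₁ : 0 ≤ c₁)
    (u v : Fin n → ℝ) :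
    (u ⬝ᵥ (M *ᵥ v)) ^ 2 ≤ (u ⬝ᵥ (M *ᵥ u)) * (v ⬝ᵥ (M *ᵥ v)) :=
  cs_form ⊤ (fun a b => a ⬝ᵥ (M *ᵥ b)) (fun a b c => add_dotProduct a b _)
    (fun c a b => by simp [smul_dotProduct, smul_eq_mul])
    (fun a b => mulVec_symm_dot hs a b)
    (fun a _ => le_trans (mul_nonneg hc₁ (dot_self_nonneg a)) (hlow a)) u v trivial trivial

lemma V1 (hs : M.IsSymm) (hlow : ∀ x, c₁ * (x ⬝ᵥ x) ≤ x ⬝ᵥ (M *ᵥ x)) (hc₁ : 0 ≤ c₁)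
    (hc₂ : 0 ≤ c₂) (hup : ∀ x, x ⬝ᵥ (M *ᵥ x) ≤ c₂ * (x ⬝ᵥ x)) (x : Fin n → ℝ) :
    (M *ᵥ x) ⬝ᵥ (M *ᵥ x) ≤ c₂ * (x ⬝ᵥ (M *ᵥ x)) := by
  have hcs := form_cs hs hlow hc₁ x (M *ᵥ x)
  have h1 : x ⬝ᵥ (M *ᵥ (M *ᵥ x)) = (M *ᵥ x) ⬝ᵥ (M *ᵥ x) := mulVec_symm_dot hs x (M *ᵥ x)
  rw [h1] at hcs
  have h2 := hup (M *ᵥ x)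
  have h3 := dot_self_nonneg (M *ᵥ x)
  have h4 : 0 ≤ x ⬝ᵥ (M *ᵥ x) := le_trans (mul_nonneg hc₁ (dot_self_nonneg x)) (hlow x)
  rcases eq_or_lt_of_le h3 with h5 | h5
  · calc (M *ᵥ x) ⬝ᵥ (M *ᵥ x) = 0 := h5.symm
    _ ≤ c₂ * (x ⬝ᵥ (M *ᵥ x)) := mul_nonneg hc₂ h4
  · have key : ((M *ᵥ x) ⬝ᵥ (M *ᵥ x)) * ((M *ᵥ x) ⬝ᵥ (M *ᵥ x)) ≤
        (c₂ * (x ⬝ᵥ (M *ᵥ x))) * ((M *ᵥ x) ⬝ᵥ (M *ᵥ x)) := by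
      nlinarith [mul_le_mul_of_nonneg_left h2 h4, hcs]
    exact le_of_mul_le_mul_right key h5

lemma V2 (hlow : ∀ x, c₁ * (x ⬝ᵥ x) ≤ x ⬝ᵥ (M *ᵥ x)) (hc₁ : 0 ≤ c₁) (x : Fin n → ℝ) :
    c₁ ^ 2 * (x ⬝ᵥ x) ≤ (M *ᵥ x) ⬝ᵥ (M *ᵥ x) := by
  have hcs := dot_cs x (M *ᵥ x)
  have h1 := hlow x
  have h2 := dot_self_nonneg x
  have h3 := dot_self_nonneg (M *ᵥ x)
  rcases eq_or_lt_of_le h2 with h4 | h4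
  · calc c₁ ^ 2 * (x ⬝ᵥ x) = c₁ ^ 2 * 0 := by rw [← h4]
    _ = 0 := by ring
    _ ≤ _ := h3
  · have hp : 0 ≤ x ⬝ᵥ (M *ᵥ x) := le_trans (mul_nonneg hc₁ (le_of_lt h4)) h1
    have key : (c₁ ^ 2 * (x ⬝ᵥ x)) * (x ⬝ᵥ x) ≤ ((M *ᵥ x) ⬝ᵥ (M *ᵥ x)) * (x ⬝ᵥ x) := by
      nlinarith [hcs, h1, mul_nonneg hc₁ (le_of_lt h4)]
    exact le_of_mul_le_mul_right key h4

end vec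

section rows
variable {n : ℕ}

lemma mul_symm_row (M w : Matrix (Fin n) (Fin n) ℝ) (hs : M.IsSymm) (i j : Fin n) :
    (w * M) i j = (M *ᵥ (w i)) j := by
  simp only [Matrix.mul_apply, Matrix.mulVec, dotProduct]
  exact Finset.sum_congr rfl fun k _ => by rw [mul_comm, hs.apply]

lemma fipS1 (M w : Matrix (Fin n) (Fin n) ℝ) (hs : M.IsSymm) :
    fip (w * M) w = ∑ i, (w i) ⬝ᵥ (M *ᵥ (w i)) := by
  simp only [fip_eq_sum, dotProduct, mul_symm_row M w hs]
  exact Finset.sum_congr rfl fun i _ => Finset.sum_congr rfl fun j _ => mul_comm _ _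

lemma fipS2 (M w : Matrix (Fin n) (Fin n) ℝ) (hs : M.IsSymm) :
    fip (w * M) (w * M) = ∑ i, (M *ᵥ (w i)) ⬝ᵥ (M *ᵥ (w i)) := by
  simp only [fip_eq_sum, dotProduct, mul_symm_row M w hs]

lemma fipS3 (w : Matrix (Fin n) (Fin n) ℝ) :
    fip w w = ∑ i, (w i) ⬝ᵥ (w i) := by
  simp only [fip_eq_sum, dotProduct]

end rows
/-- The one-step Lyapunov decrease inequality in the proof of **Theorem 3**: for
`y ∈ 𝔤ᗮ` and the Euler step `y⁺ = y - hα P⊥((H y) M⁻¹)`, the discrete Lyapunov function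
`𝒱_d(z) = ⟨H z, z⟩` satisfies
`𝒱_d(y⁺) ≤ (1 - 2αh λmin/c₂ + α²h² λmax²/c₁²) 𝒱_d(y)`. -/
theorem discrete_lyapunov_one_step {n : ℕ}
    (𝔤 : Submodule ℝ (Matrix (Fin n) (Fin n) ℝ))
    (P : Matrix (Fin n) (Fin n) ℝ →ₗ[ℝ] Matrix (Fin n) (Fin n) ℝ)
    (hP : ∀ x, P x ∈ mperp 𝔤 ∧ x - P x ∈ 𝔤)
    (H : Matrix (Fin n) (Fin n) ℝ →ₗ[ℝ] Matrix (Fin n) (Fin n) ℝ)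
    (hsa : ∀ v w, fip (H v) w = fip v (H w))
    (hHperp : ∀ y ∈ mperp 𝔤, H y ∈ mperp 𝔤)
    (lmin lmax : ℝ) (hlmin : 0 < lmin) (hlminmax : lmin ≤ lmax)
    (hbound : ∀ y ∈ mperp 𝔤,
      lmin * ‖y‖ ^ 2 ≤ fip (H y) y ∧ fip (H y) y ≤ lmax * ‖y‖ ^ 2)
    (α h : ℝ) (hα : 0 < α) (hh : 0 < h)
    (M : Matrix (Fin n) (Fin n) ℝ) (hMsymm : M.IsSymm)
    (c₁ c₂ : ℝ) (hc₁ : 0 < c₁) (hc₁₂ : c₁ ≤ c₂)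
    (hMlow : (M - c₁ • 1).PosSemidef)
    (hMup : ((c₂ • 1 : Matrix (Fin n) (Fin n) ℝ) - M).PosSemidef)
    (y : Matrix (Fin n) (Fin n) ℝ) (hy : y ∈ mperp 𝔤) :
    fip (H (y - (h * α) • P (H y * M⁻¹))) (y - (h * α) • P (H y * M⁻¹)) ≤
      (1 - 2 * α * h * lmin / c₂ + α ^ 2 * h ^ 2 * lmax ^ 2 / c₁ ^ 2) * fip (H y) y := by
  have hc₂ : 0 < c₂ := lt_of_lt_of_le hc₁ hc₁₂
  have hlmax : 0 < lmax := lt_of_lt_of_le hlmin hlminmax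
  -- vector-level bounds on M
  have hlowv : ∀ x : Fin n → ℝ, c₁ * (x ⬝ᵥ x) ≤ x ⬝ᵥ (M *ᵥ x) := by
    intro x
    have h0 := hMlow.dotProduct_mulVec_nonneg x
    simp only [Matrix.sub_mulVec, dotProduct_sub, Matrix.smul_mulVec,
      Matrix.one_mulVec, dotProduct_smul, smul_eq_mul, star_trivial, sub_nonneg] at h0
    exact h0
  have hupv : ∀ x : Fin n → ℝ, x ⬝ᵥ (M *ᵥ x) ≤ c₂ * (x ⬝ᵥ x) := by
    intro x
    have h0 := hMup.dotProduct_mulVec_nonneg x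
    simp only [Matrix.sub_mulVec, dotProduct_sub, Matrix.smul_mulVec,
      Matrix.one_mulVec, dotProduct_smul, smul_eq_mul, star_trivial, sub_nonneg] at h0
    exact h0
  -- M is positive definite, hence invertible
  have hherm : M.IsHermitian := by
    rw [Matrix.IsHermitian, Matrix.conjTranspose_eq_transpose_of_trivial]
    exact hMsymm
  have hpd : M.PosDef := by
    refine Matrix.PosDef.of_dotProduct_mulVec_pos hherm fun x hx => ?_
    have hxx : 0 < x ⬝ᵥ x :=
      lt_of_le_of_ne (dot_self_nonneg x) fun hc =>
        hx (dotProduct_self_eq_zero.mp hc.symm)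
    calc (0:ℝ) < c₁ * (x ⬝ᵥ x) := by positivity
    _ ≤ x ⬝ᵥ (M *ᵥ x) := hlowv x
    _ = star x ⬝ᵥ (M *ᵥ x) := by rw [star_trivial]
  have hdet : IsUnit M.det := (Matrix.isUnit_iff_isUnit_det M).mp hpd.isUnit
  set A := H y with hA
  set w : Matrix (Fin n) (Fin n) ℝ := H y * M⁻¹ with hwdef
  set z := P w with hz
  have hwM : w * M = A := by
    rw [hwdef, Matrix.mul_assoc, Matrix.nonsing_inv_mul M hdet, Matrix.mul_one]
  -- memberships
  have hAperp : A ∈ mperp 𝔤 := hHperp y hy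
  have hAperp' : ∀ v ∈ 𝔤, fip v A = 0 := hAperp
  have hzperp : z ∈ mperp 𝔤 := (hP w).1
  have hzperp' : ∀ v ∈ 𝔤, fip v z = 0 := hzperp
  have hd : w - z ∈ 𝔤 := (hP w).2
  -- fip A z = fip A w
  have hAz : fip A z = fip A w := by
    have h0 : fip (w - z) A = 0 := hAperp' _ hd
    rw [fip_sub_left] at h0
    have := fip_symm A z
    have := fip_symm A w
    linarith [fip_symm A z, fip_symm A w, h0]
  -- projection contraction
  have hzz : fip z z ≤ fip w w := by
    have h0 : fip (w - z) z = 0 := hzperp' _ hd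
    have h1 : fip z (w - z) = 0 := by rw [fip_symm]; exact h0
    have e : fip w w
        = fip z z + fip z (w - z) + (fip (w - z) z + fip (w - z) (w - z)) := by
      conv_lhs => rw [show w = z + (w - z) by abel]
      rw [fip_add_left, fip_add_right, fip_add_right]
    rw [h0, h1] at e
    have := fip_self_nonneg (w - z)
    linarith
  -- bounds from hbound
  have hb_y := hbound y hy
  have hb_A := hbound A hAperp
  have hb_z := hbound z hzperp
  rw [← fip_self_eq_norm_sq] at hb_y hb_A hb_z
  set Vy := fip A y with hVy
  have hVy0 : 0 ≤ Vy := le_trans (mul_nonneg hlmin.le (fip_self_nonneg y)) hb_y.1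
  -- Cauchy-Schwarz for fip
  have csfip : fip A y ^ 2 ≤ fip A A * fip y y :=
    cs_form ⊤ fip (fun a b c => fip_add_left a b c) (fun c a b => fip_smul_left c a b)
      fip_symm (fun v _ => fip_self_nonneg v) A y trivial trivial
  rw [← hVy] at csfip
  -- Cauchy-Schwarz for the form (u,v) ↦ fip (H u) v on mperp 𝔤
  have csH : fip (H y) A ^ 2 ≤ fip (H y) y * fip (H A) A := by
    refine cs_form (mperp 𝔤) (fun u v => fip (H u) v) ?_ ?_ ?_ ?_ y A hy hAperp
    · intro a b c
      show fip (H (a + b)) c = fip (H a) c + fip (H b) c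
      rw [map_add, fip_add_left]
    · intro c a b
      show fip (H (c • a)) b = c * fip (H a) b
      rw [map_smul, fip_smul_left]
    · intro a b
      show fip (H a) b = fip (H b) a
      rw [hsa, fip_symm]
    · intro v hv
      exact le_trans (mul_nonneg hlmin.le (fip_self_nonneg v)) ((hbound v hv).1.trans_eq'
        (by rw [fip_self_eq_norm_sq]))
  rw [← hA, ← hVy] at csH
  -- lmin * Vy ≤ fip A A
  have hAAge : lmin * Vy ≤ fip A A := by
    rcases eq_or_lt_of_le hVy0 with h0 | h0
    · rw [← h0, mul_zero]; exact fip_self_nonneg A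
    · have key : (lmin * Vy) * Vy ≤ fip A A * Vy := by
        nlinarith [mul_le_mul_of_nonneg_left csfip hlmin.le,
          mul_le_mul_of_nonneg_left hb_y.1 (fip_self_nonneg A)]
      exact le_of_mul_le_mul_right key h0
  -- fip A A ≤ lmax * Vy
  have hAAle : fip A A ≤ lmax * Vy := by
    have hAA0 : 0 ≤ fip A A := fip_self_nonneg A
    rcases eq_or_lt_of_le hAA0 with h0 | h0
    · rw [← h0]; positivity
    · have key : fip A A * fip A A ≤ (lmax * Vy) * fip A A := by
        nlinarith [csH, mul_le_mul_of_nonneg_left hb_A.2 hVy0]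
      exact le_of_mul_le_mul_right key h0
  -- trace bounds via rows
  have h1 : fip A A ≤ c₂ * fip A w := by
    have e1 : fip A A = ∑ i, (M *ᵥ (w i)) ⬝ᵥ (M *ᵥ (w i)) := by
      rw [← hwM]; exact fipS2 M w hMsymm
    have e2 : fip A w = ∑ i, (w i) ⬝ᵥ (M *ᵥ (w i)) := by
      conv_lhs => rw [← hwM]
      exact fipS1 M w hMsymm
    rw [e1, e2, Finset.mul_sum]
    exact Finset.sum_le_sum fun i _ => V1 hMsymm hlowv hc₁.le hc₂.le hupv (w i)
  have h2 : c₁ ^ 2 * fip w w ≤ fip A A := by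
    have e1 : fip A A = ∑ i, (M *ᵥ (w i)) ⬝ᵥ (M *ᵥ (w i)) := by
      rw [← hwM]; exact fipS2 M w hMsymm
    rw [e1, fipS3, Finset.mul_sum]
    exact Finset.sum_le_sum fun i _ => V2 hlowv hc₁.le (w i)
  -- bounds on the two key quantities
  have hQ1 : lmin * Vy / c₂ ≤ fip A z := by
    rw [div_le_iff₀ hc₂, hAz]
    calc lmin * Vy ≤ fip A A := hAAge
    _ ≤ c₂ * fip A w := h1
    _ = fip A w * c₂ := by ring
  have hQ2 : fip (H z) z ≤ lmax ^ 2 * Vy / c₁ ^ 2 := by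
    rw [le_div_iff₀ (by positivity)]
    have s1 : fip (H z) z ≤ lmax * fip z z := hb_z.2
    have s2 : fip z z ≤ fip w w := hzz
    have s3 : c₁ ^ 2 * fip w w ≤ lmax * Vy := le_trans h2 hAAle
    have hzz0 : 0 ≤ fip z z := fip_self_nonneg z
    nlinarith [s1, s2, s3, hzz0, hlmax.le, mul_le_mul_of_nonneg_left s2 hlmax.le]
  -- expansion of the quadratic form
  set t := h * α with ht
  have htpos : 0 < t := mul_pos hh hα
  have hcross : fip (H z) y = fip A z := by rw [hsa z y, fip_symm]
  have expand : fip (H (y - t • z)) (y - t • z)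
      = Vy - 2 * t * fip A z + t ^ 2 * fip (H z) z := by
    rw [map_sub, map_smul]
    rw [fip_sub_left, fip_sub_right, fip_sub_right, fip_smul_left, fip_smul_right,
      fip_smul_right, fip_smul_left, hcross]
    rw [hVy]
    ring
  rw [expand]
  have e1 : 2 * t * (lmin * Vy / c₂) ≤ 2 * t * fip A z :=
    mul_le_mul_of_nonneg_left hQ1 (by positivity)
  have e2 : t ^ 2 * fip (H z) z ≤ t ^ 2 * (lmax ^ 2 * Vy / c₁ ^ 2) :=
    mul_le_mul_of_nonneg_left hQ2 (by positivity)
  have final : Vy - 2 * t * fip A z + t ^ 2 * fip (H z) z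
      ≤ Vy - 2 * t * (lmin * Vy / c₂) + t ^ 2 * (lmax ^ 2 * Vy / c₁ ^ 2) := by
    linarith [e1, e2]
  calc Vy - 2 * t * fip A z + t ^ 2 * fip (H z) z
      ≤ Vy - 2 * t * (lmin * Vy / c₂) + t ^ 2 * (lmax ^ 2 * Vy / c₁ ^ 2) := final
    _ = (1 - 2 * α * h * lmin / c₂ + α ^ 2 * h ^ 2 * lmax ^ 2 / c₁ ^ 2) * Vy := by
        rw [ht]; ring
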